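/- Under Assumptions 1 and 2, the restricted best- and worst-case values equal the optimal values of the primal-dual bilinear programs: q^- = inf{(ĉ+c)^T x : Âx = b̂+b, x ≥ 0, Â^T y + s = ĉ+c, s ≥ 0, (b,c) ∈ U} and q^+ = sup{(b̂+b)^T y : Âx = b̂+b, x ≥ 0, Â^T y + s = ĉ+c, s ≥ 0, (b,c) ∈ U}. -/

import Mathlib

open Matrix

/-- The perturbed primal feasible set `P(b) = {x : Âx = b̂ + b, x ≥ 0}`. -/
def Pfeas (m n : ℕ) (Ahat : Matrix (Fin m) (Fin n) ℝ) (bhat b : Fin m → ℝ) :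
    Set (Fin n → ℝ) :=
  {x | Ahat.mulVec x = bhat + b ∧ 0 ≤ x}

/-- The perturbed dual feasible set `D(c) = {(y,s) : Âᵀy + s = ĉ + c, s ≥ 0}`. -/
def Dfeas (m n : ℕ) (Ahat : Matrix (Fin m) (Fin n) ℝ) (chat c : Fin n → ℝ) :
    Set ((Fin m → ℝ) × (Fin n → ℝ)) :=
  {ys | Ahat.transpose.mulVec ys.1 + ys.2 = chat + c ∧ 0 ≤ ys.2}

/-- The perturbed optimal value `p(b,c)` as an extended real number
(`sInf ∅ = +∞` in `EReal`). -/
noncomputable def pval (m n : ℕ) (Ahat : Matrix (Fin m) (Fin n) ℝ)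
    (bhat b : Fin m → ℝ) (chat c : Fin n → ℝ) : EReal :=
  sInf ((fun x => (((chat + c) ⬝ᵥ x : ℝ) : EReal)) '' Pfeas m n Ahat bhat b)

/-- The restricted uncertainty set `Ū = {(b,c) ∈ U : P(b) ≠ ∅, D(c) ≠ ∅}`. -/
def Ubar (m n : ℕ) (Ahat : Matrix (Fin m) (Fin n) ℝ) (bhat : Fin m → ℝ)
    (chat : Fin n → ℝ) (U : Set ((Fin m → ℝ) × (Fin n → ℝ))) :
    Set ((Fin m → ℝ) × (Fin n → ℝ)) :=
  {bc ∈ U | (Pfeas m n Ahat bhat bc.1).Nonempty ∧ (Dfeas m n Ahat chat bc.2).Nonempty}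


lemma cone_isClosed : ∀ (n m : ℕ) (A : Matrix (Fin m) (Fin n) ℝ),
    IsClosed {v : Fin m → ℝ | ∃ x, 0 ≤ x ∧ A.mulVec x = v} := by
  intro n
  induction n with
  | zero =>
    intro m A
    have : {v : Fin m → ℝ | ∃ x, 0 ≤ x ∧ A.mulVec x = v} = {0} := by
      ext v
      simp only [Set.mem_setOf_eq, Set.mem_singleton_iff]
      constructor
      · rintro ⟨x, -, rfl⟩
        funext i
        simp [Matrix.mulVec, dotProduct]
      · rintro rfl
        exact ⟨0, le_refl _, by funext i; simp [Matrix.mulVec, dotProduct]⟩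
    rw [this]; exact isClosed_singleton
  | succ n ih =>
    intro m A
    by_cases hker : LinearMap.ker A.mulVecLin = ⊥
    · have hemb := LinearMap.isClosedEmbedding_of_injective (𝕜 := ℝ) hker
      have : {v : Fin m → ℝ | ∃ x, 0 ≤ x ∧ A.mulVec x = v}
          = A.mulVecLin '' (Set.Ici 0) := by
        ext v
        simp only [Set.mem_setOf_eq, Set.mem_image, Set.mem_Ici, Matrix.mulVecLin_apply]
      rw [this]
      exact hemb.isClosedMap _ isClosed_Ici
    · -- nontrivial kernel: get w with A w = 0 and some coordinate negative
      obtain ⟨u, hu, hune⟩ := (Submodule.ne_bot_iff _).mp hker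
      obtain ⟨j₀, hj₀⟩ : ∃ j, u j ≠ 0 := by
        by_contra h
        push_neg at h
        exact hune (funext h)
      have hu0 : A.mulVec u = 0 := hu
      obtain ⟨w, hw0, jneg, hjneg⟩ : ∃ w, A.mulVec w = 0 ∧ ∃ j, w j < 0 := by
        rcases lt_or_gt_of_ne hj₀ with h | h
        · exact ⟨u, hu0, j₀, h⟩
        · exact ⟨-u, by rw [Matrix.mulVec_neg, hu0, neg_zero], j₀, by simpa using h⟩
      have key : {v : Fin m → ℝ | ∃ x, 0 ≤ x ∧ A.mulVec x = v}
          = ⋃ (j : Fin (n + 1)), {v : Fin m → ℝ |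
              ∃ x, 0 ≤ x ∧ (A.submatrix id j.succAbove).mulVec x = v} := by
        ext v
        simp only [Set.mem_setOf_eq, Set.mem_iUnion]
        constructor
        · rintro ⟨x, hx, rfl⟩
          -- move along w until a coordinate hits zero
          set T : Finset (Fin (n + 1)) := Finset.univ.filter (fun j => w j < 0) with hT
          have hTne : T.Nonempty := ⟨jneg, by simp [hT, hjneg]⟩
          obtain ⟨js, hjs, hjsmin⟩ := T.exists_min_image (fun j => x j / (-w j)) hTne
          have hwjs : w js < 0 := by simpa [hT] using hjs
          set t : ℝ := x js / (-w js) with ht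
          have ht0 : 0 ≤ t := div_nonneg (hx js) (by linarith)
          set x' : Fin (n + 1) → ℝ := x + t • w with hx'
          have hx'0 : 0 ≤ x' := by
            intro j
            by_cases hj : w j < 0
            · have := hjsmin j (by simp [hT, hj])
              have h1 : t * (-w j) ≤ x j := by
                rw [← le_div_iff₀ (by linarith : (0:ℝ) < -w j)]
                exact this
              simp only [hx', Pi.add_apply, Pi.smul_apply, smul_eq_mul, Pi.zero_apply]
              nlinarith
            · push_neg at hj
              simp only [hx', Pi.add_apply, Pi.smul_apply, smul_eq_mul, Pi.zero_apply]
              have h2 := mul_nonneg ht0 hj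
              have h3 : (0:ℝ) ≤ x j := hx j
              linarith
          have hx'js : x' js = 0 := by
            have hne : w js ≠ 0 := ne_of_lt hwjs
            simp only [hx', Pi.add_apply, Pi.smul_apply, smul_eq_mul, ht]
            have h4 : x js / -w js * w js = -(x js) := by
              rw [div_mul_eq_mul_div, div_neg, mul_div_assoc, div_self hne, mul_one]
            rw [h4]; ring
          have hAx' : A.mulVec x' = A.mulVec x := by
            rw [hx', Matrix.mulVec_add, Matrix.mulVec_smul, hw0, smul_zero, add_zero]
          refine ⟨js, x' ∘ js.succAbove, fun i => hx'0 _, ?_⟩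
          funext i
          rw [← hAx']
          simp only [Matrix.mulVec, dotProduct, Matrix.submatrix_apply, id_eq,
            Function.comp_apply]
          rw [Fin.sum_univ_succAbove (fun k => A i k * x' k) js, hx'js, mul_zero, zero_add]
        · rintro ⟨j, x, hx, rfl⟩
          refine ⟨j.insertNth 0 x, ?_, ?_⟩
          · intro k
            rcases eq_or_ne k j with rfl | hk
            · show (0:ℝ) ≤ _
              simp
            · obtain ⟨i, hi⟩ := Fin.exists_succAbove_eq hk
              show (0:ℝ) ≤ _
              rw [← hi, Fin.insertNth_apply_succAbove]
              exact hx i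
          · funext i
            simp only [Matrix.mulVec, dotProduct, Matrix.submatrix_apply, id_eq]
            rw [Fin.sum_univ_succAbove _ j]
            simp [Fin.insertNth_apply_same, Fin.insertNth_apply_succAbove]
      rw [key]
      exact isClosed_iUnion_of_finite (fun j => ih m (A.submatrix id j.succAbove))

/-- Farkas lemma. -/
lemma farkas {n m : ℕ} (A : Matrix (Fin m) (Fin n) ℝ) (b : Fin m → ℝ)
    (h : ¬ ∃ x, 0 ≤ x ∧ A.mulVec x = b) :
    ∃ y : Fin m → ℝ, 0 ≤ A.transpose.mulVec y ∧ b ⬝ᵥ y < 0 := by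
  classical
  set E := (PiLp.continuousLinearEquiv 2 ℝ (fun _ : Fin m => ℝ)).symm with hE
  set S : Set (Fin m → ℝ) := {v | ∃ x, 0 ≤ x ∧ A.mulVec x = v} with hS
  have hScone : ∀ v ∈ S, ∀ w ∈ S, v + w ∈ S := by
    rintro _ ⟨x, hx, rfl⟩ _ ⟨x', hx', rfl⟩
    exact ⟨x + x', add_nonneg hx hx', by rw [Matrix.mulVec_add]⟩
  have hSsmul : ∀ (c : ℝ), 0 < c → ∀ v ∈ S, c • v ∈ S := by
    rintro c hc _ ⟨x, hx, rfl⟩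
    exact ⟨c • x, smul_nonneg hc.le hx, by rw [Matrix.mulVec_smul]⟩
  let K : ConvexCone ℝ (EuclideanSpace ℝ (Fin m)) :=
    { carrier := E '' S
      smul_mem' := by
        rintro c hc _ ⟨v, hv, rfl⟩
        exact ⟨c • v, hSsmul c hc v hv, by simp⟩
      add_mem' := by
        rintro _ ⟨v, hv, rfl⟩ _ ⟨w, hw, rfl⟩
        exact ⟨v + w, hScone v hv w hw, by simp⟩ }
  have hKne : (K : Set (EuclideanSpace ℝ (Fin m))).Nonempty :=
    ⟨E 0, ⟨0, ⟨0, le_refl _, by simp⟩, rfl⟩⟩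
  have hKcl : IsClosed (K : Set (EuclideanSpace ℝ (Fin m))) :=
    (E.toHomeomorph.isClosedMap) _ (cone_isClosed n m A)
  have hbK : E b ∉ K := by
    rintro ⟨v, hv, hvb⟩
    exact h (by rwa [show v = b from E.injective hvb] at hv)
  let C : ProperCone ℝ (EuclideanSpace ℝ (Fin m)) :=
    { carrier := E '' S
      add_mem' := by
        rintro _ _ ⟨v, hv, rfl⟩ ⟨w, hw, rfl⟩
        exact ⟨v + w, hScone v hv w hw, by simp⟩
      zero_mem' := ⟨0, ⟨0, le_refl _, by simp⟩, by simp⟩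
      smul_mem' := by
        rintro c _ ⟨_, ⟨x, hx, rfl⟩, rfl⟩
        exact ⟨(c:ℝ) • A.mulVec x, ⟨(c:ℝ) • x, smul_nonneg c.2 hx, by rw [Matrix.mulVec_smul]⟩,
          by rw [map_smul]; rfl⟩
      isClosed' := hKcl }
  obtain ⟨y, hy1, hy2⟩ :=
    ProperCone.hyperplane_separation' C hbK
  refine ⟨E.symm y, ?_, ?_⟩
  · intro j
    have := hy1 (E (A.mulVec (Pi.single j 1))) ⟨_, ⟨Pi.single j 1, by
      { refine ⟨fun k => ?_, rfl⟩
        by_cases hk : k = j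
        · subst hk; simp
        · simp [Pi.single_eq_of_ne hk] }⟩, rfl⟩
    rw [PiLp.inner_apply] at this
    simp only [RCLike.inner_apply, starRingEnd_apply, star_trivial] at this
    have heq : ∑ i, y i * (E (A.mulVec (Pi.single j 1))) i
        = (Pi.single j 1 : Fin n → ℝ) ⬝ᵥ (A.transpose.mulVec (E.symm y)) := by
      show (E.symm y) ⬝ᵥ (A.mulVec (Pi.single j 1)) = _
      rw [Matrix.dotProduct_mulVec, ← Matrix.mulVec_transpose,
        dotProduct_comm]
    rw [heq, single_dotProduct, one_mul] at this
    exact this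
  · have h5 : (inner ℝ y (E b) : ℝ) = b ⬝ᵥ (E.symm y) := by
      rw [PiLp.inner_apply]
      simp only [RCLike.inner_apply, starRingEnd_apply, star_trivial]
      show b ⬝ᵥ (E.symm y) = b ⬝ᵥ (E.symm y)
      rw [dotProduct_comm]
    rwa [real_inner_comm, h5] at hy2

lemma weak_duality {m n : ℕ} {A : Matrix (Fin m) (Fin n) ℝ} {b : Fin m → ℝ}
    {c : Fin n → ℝ} {x : Fin n → ℝ} {y : Fin m → ℝ} {s : Fin n → ℝ}
    (hx : A.mulVec x = b) (hx0 : 0 ≤ x)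
    (hys : A.transpose.mulVec y + s = c) (hs : 0 ≤ s) :
    b ⬝ᵥ y ≤ c ⬝ᵥ x := by
  have h1 : c ⬝ᵥ x = (A.transpose.mulVec y) ⬝ᵥ x + s ⬝ᵥ x := by
    rw [← hys, add_dotProduct]
  have h2 : (A.transpose.mulVec y) ⬝ᵥ x = b ⬝ᵥ y := by
    rw [Matrix.mulVec_transpose, ← Matrix.dotProduct_mulVec, hx, dotProduct_comm]
  have h3 : 0 ≤ s ⬝ᵥ x :=
    Finset.sum_nonneg fun i _ => mul_nonneg (hs i) (hx0 i)
  rw [h1, h2]; linarith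

lemma strong_duality_aux {m n : ℕ} (A : Matrix (Fin m) (Fin n) ℝ) (b : Fin m → ℝ)
    (c : Fin n → ℝ) (x₀ : Fin n → ℝ) (hx₀ : A.mulVec x₀ = b) (hx₀0 : 0 ≤ x₀)
    (y₀ : Fin m → ℝ) (s₀ : Fin n → ℝ) (hys₀ : A.transpose.mulVec y₀ + s₀ = c)
    (hs₀ : 0 ≤ s₀) {ε : ℝ} (hε : 0 < ε) :
    ∃ y s, A.transpose.mulVec y + s = c ∧ 0 ≤ s ∧
      sInf ((fun x => c ⬝ᵥ x) '' {x | A.mulVec x = b ∧ 0 ≤ x}) - ε < b ⬝ᵥ y := by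
  classical
  set V : Set ℝ := (fun x => c ⬝ᵥ x) '' {x | A.mulVec x = b ∧ 0 ≤ x} with hV
  have hVne : V.Nonempty := ⟨c ⬝ᵥ x₀, ⟨x₀, ⟨hx₀, hx₀0⟩, rfl⟩⟩
  have hVbdd : BddBelow V := by
    refine ⟨b ⬝ᵥ y₀, ?_⟩
    rintro _ ⟨x, ⟨hx, hx0⟩, rfl⟩
    exact weak_duality hx hx0 hys₀ hs₀
  set p : ℝ := sInf V with hp
  -- augmented system
  set M : Matrix (Fin (m + 1)) (Fin (n + 1)) ℝ :=
    fun i j => Fin.lastCases (Fin.lastCases 1 (fun j' => c j') j)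
      (fun i' => Fin.lastCases 0 (fun j' => A i' j') j) i with hM
  set d : Fin (m + 1) → ℝ := fun i => Fin.lastCases (p - ε) b i with hd
  have hinfeas : ¬ ∃ z, 0 ≤ z ∧ M.mulVec z = d := by
    rintro ⟨z, hz0, hzd⟩
    set x : Fin n → ℝ := z ∘ Fin.castSucc with hxdef
    have hAx : A.mulVec x = b := by
      funext i'
      have := congrFun hzd i'.castSucc
      rw [Matrix.mulVec, dotProduct, Fin.sum_univ_castSucc] at this
      simp only [hM, hd, Fin.lastCases_castSucc, Fin.lastCases_last] at this
      simpa [Matrix.mulVec, dotProduct, hxdef] using this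
    have hlast : c ⬝ᵥ x + z (Fin.last n) = p - ε := by
      have := congrFun hzd (Fin.last m)
      rw [Matrix.mulVec, dotProduct, Fin.sum_univ_castSucc] at this
      simp only [hM, hd, Fin.lastCases_castSucc, Fin.lastCases_last, one_mul] at this
      simpa [dotProduct, hxdef] using this
    have hmem : c ⬝ᵥ x ∈ V := ⟨x, ⟨hAx, fun i => hz0 _⟩, rfl⟩
    have hle : p ≤ c ⬝ᵥ x := csInf_le hVbdd hmem
    have hz : 0 ≤ z (Fin.last n) := hz0 _
    linarith
  obtain ⟨w, hw1, hw2⟩ := farkas M d hinfeas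
  set yt : Fin m → ℝ := w ∘ Fin.castSucc with hyt
  set τ : ℝ := w (Fin.last m) with hτ
  have h1 : ∀ j', 0 ≤ (A.transpose.mulVec yt) j' + c j' * τ := by
    intro j'
    have := hw1 j'.castSucc
    rw [Matrix.mulVec, dotProduct, Fin.sum_univ_castSucc] at this
    simp only [hM, Matrix.transpose, Matrix.of_apply, Fin.lastCases_castSucc, Fin.lastCases_last] at this
    simpa [Matrix.mulVec, dotProduct, Matrix.transpose_apply, hyt, hτ] using this
  have h2 : 0 ≤ τ := by
    have := hw1 (Fin.last n)
    rw [Matrix.mulVec, dotProduct, Fin.sum_univ_castSucc] at this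
    simp only [hM, Matrix.transpose, Matrix.of_apply, Fin.lastCases_castSucc, Fin.lastCases_last,
      zero_mul, one_mul] at this
    simpa [hτ] using this
  have h3 : b ⬝ᵥ yt + (p - ε) * τ < 0 := by
    rw [dotProduct, Fin.sum_univ_castSucc] at hw2
    simp only [hd, Fin.lastCases_castSucc, Fin.lastCases_last] at hw2
    simpa [dotProduct, hyt, hτ, mul_comm] using hw2
  rcases eq_or_lt_of_le h2 with hτ0 | hτpos
  · exfalso
    have hA : 0 ≤ A.transpose.mulVec yt := by
      intro j'; have := h1 j'; rw [← hτ0] at this; simpa using this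
    have hb : b ⬝ᵥ yt < 0 := by rw [← hτ0] at h3; simpa using h3
    have : 0 ≤ b ⬝ᵥ yt := by
      rw [← hx₀, dotProduct_comm, Matrix.dotProduct_mulVec,
        ← Matrix.mulVec_transpose]
      exact Finset.sum_nonneg fun j _ => mul_nonneg (hA j) (hx₀0 j)
    linarith
  · refine ⟨(-τ⁻¹) • yt, c - A.transpose.mulVec ((-τ⁻¹) • yt), by ring, ?_, ?_⟩
    · intro j
      have := h1 j
      have hτne : τ ≠ 0 := ne_of_gt hτpos
      simp only [Pi.sub_apply, Matrix.mulVec_smul, Pi.smul_apply, smul_eq_mul,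
        Pi.zero_apply]
      rw [sub_nonneg]
      have h7 := mul_le_mul_of_nonneg_right
        (by linarith [h1 j] : -((A.transpose.mulVec yt) j) ≤ c j * τ) (inv_nonneg.mpr h2)
      rw [mul_assoc, mul_inv_cancel₀ hτne, mul_one] at h7
      linarith [h7]
    · have hτne : τ ≠ 0 := ne_of_gt hτpos
      rw [dotProduct_smul, smul_eq_mul]
      have h8 : τ⁻¹ * (b ⬝ᵥ yt) < τ⁻¹ * (-(p - ε) * τ) := by
        apply mul_lt_mul_of_pos_left _ (inv_pos.mpr hτpos)
        linarith
      have h9 : τ⁻¹ * (-(p - ε) * τ) = -(p - ε) := by field_simp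
      rw [h9] at h8
      have : -τ⁻¹ * (b ⬝ᵥ yt) = -(τ⁻¹ * (b ⬝ᵥ yt)) := by ring
      rw [this]
      linarith

lemma ereal_le_of_forall_sub (p : ℝ) (x : EReal)
    (h : ∀ ε : ℝ, 0 < ε → ((p - ε : ℝ) : EReal) ≤ x) : (p : EReal) ≤ x := by
  induction x using EReal.rec with
  | bot =>
    have := le_bot_iff.mp (h 1 one_pos)
    exact absurd this (EReal.coe_ne_bot _)
  | coe r =>
    rw [EReal.coe_le_coe_iff]
    by_contra hc
    push_neg at hc
    have := EReal.coe_le_coe_iff.mp (h ((p - r) / 2) (by linarith))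
    linarith
  | top => exact le_top


/-- Under Assumption 1 (`U` compact, convex, containing
`(0,0)`) and Assumption 2 (`P(0)` and `D(0)` nonempty, at least one bounded),
the restricted best- and worst-case values equal the optimal values of the
primal-dual bilinear programs:
`q⁻ = inf{(ĉ+c)ᵀx : Âx = b̂+b, x ≥ 0, Âᵀy + s = ĉ+c, s ≥ 0, (b,c) ∈ U}` and
`q⁺ = sup{(b̂+b)ᵀy : Âx = b̂+b, x ≥ 0, Âᵀy + s = ĉ+c, s ≥ 0, (b,c) ∈ U}`. -/
theorem q_values_primal_dual_bilinear_formulations (m n : ℕ)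
    (Ahat : Matrix (Fin m) (Fin n) ℝ) (bhat : Fin m → ℝ) (chat : Fin n → ℝ)
    (U : Set ((Fin m → ℝ) × (Fin n → ℝ)))
    (hUcompact : IsCompact U) (hUconvex : Convex ℝ U) (hU0 : (0, 0) ∈ U)
    (hP0 : (Pfeas m n Ahat bhat 0).Nonempty) (hD0 : (Dfeas m n Ahat chat 0).Nonempty)
    (hbdd : Bornology.IsBounded (Pfeas m n Ahat bhat 0) ∨
      Bornology.IsBounded (Dfeas m n Ahat chat 0)) :
    sInf ((fun bc => pval m n Ahat bhat bc.1 chat bc.2) ''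
        Ubar m n Ahat bhat chat U) =
      sInf {e : EReal | ∃ b c x y s, (b, c) ∈ U ∧
        Ahat.mulVec x = bhat + b ∧ 0 ≤ x ∧
        Ahat.transpose.mulVec y + s = chat + c ∧ 0 ≤ s ∧
        e = (((chat + c) ⬝ᵥ x : ℝ) : EReal)} ∧
    sSup ((fun bc => pval m n Ahat bhat bc.1 chat bc.2) ''
        Ubar m n Ahat bhat chat U) =
      sSup {e : EReal | ∃ b c x y s, (b, c) ∈ U ∧
        Ahat.mulVec x = bhat + b ∧ 0 ≤ x ∧
        Ahat.transpose.mulVec y + s = chat + c ∧ 0 ≤ s ∧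
        e = (((bhat + b) ⬝ᵥ y : ℝ) : EReal)} := by
  constructor
  · apply le_antisymm
    · apply le_sInf
      rintro e ⟨b, c, x, y, s, hbc, hx, hx0, hys, hs, rfl⟩
      have hU : (b, c) ∈ Ubar m n Ahat bhat chat U :=
        ⟨hbc, ⟨x, hx, hx0⟩, ⟨(y, s), hys, hs⟩⟩
      calc sInf ((fun bc => pval m n Ahat bhat bc.1 chat bc.2) ''
            Ubar m n Ahat bhat chat U) ≤ pval m n Ahat bhat b chat c :=
              sInf_le ⟨(b, c), hU, rfl⟩
        _ ≤ _ := sInf_le ⟨x, ⟨hx, hx0⟩, rfl⟩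
    · apply le_sInf
      rintro v ⟨bc, hbc, rfl⟩
      apply le_sInf
      rintro e ⟨x, hxP, rfl⟩
      obtain ⟨⟨y, s⟩, hys, hs⟩ := hbc.2.2
      exact sInf_le ⟨bc.1, bc.2, x, y, s, hbc.1, hxP.1, hxP.2, hys, hs, rfl⟩
  · apply le_antisymm
    · apply sSup_le
      rintro v ⟨bc, hbc, rfl⟩
      obtain ⟨hbcU, hPne, hDne⟩ := hbc
      show pval m n Ahat bhat bc.1 chat bc.2 ≤ _
      obtain ⟨x₀, hx₀, hx₀0⟩ := hPne
      obtain ⟨⟨y₀, s₀⟩, hys₀, hs₀⟩ := hDne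
      set V : Set ℝ := (fun x => (chat + bc.2) ⬝ᵥ x) ''
        {x | Ahat.mulVec x = bhat + bc.1 ∧ 0 ≤ x} with hV
      have hVne : V.Nonempty := ⟨_, ⟨x₀, ⟨hx₀, hx₀0⟩, rfl⟩⟩
      have hVbdd : BddBelow V := by
        refine ⟨(bhat + bc.1) ⬝ᵥ y₀, ?_⟩
        rintro _ ⟨x, ⟨hx, hx0⟩, rfl⟩
        exact weak_duality hx hx0 hys₀ hs₀
      have hpv : pval m n Ahat bhat bc.1 chat bc.2 = ((sInf V : ℝ) : EReal) := by
        rw [pval, show (fun x => (((chat + bc.2) ⬝ᵥ x : ℝ) : EReal)) ''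
            Pfeas m n Ahat bhat bc.1
          = Real.toEReal '' V from (Set.image_image _ _ _).symm]
        exact (Monotone.map_csInf_of_continuousAt (continuous_coe_real_ereal.continuousAt)
          (fun a b h => EReal.coe_le_coe_iff.mpr h) hVne hVbdd).symm
      rw [hpv]
      apply ereal_le_of_forall_sub
      intro ε hε
      obtain ⟨y, s, hys, hs, hlt⟩ := strong_duality_aux Ahat (bhat + bc.1) (chat + bc.2)
        x₀ hx₀ hx₀0 y₀ s₀ hys₀ hs₀ hε
      calc (((sInf V - ε : ℝ)) : EReal) ≤ (((bhat + bc.1) ⬝ᵥ y : ℝ) : EReal) :=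
            EReal.coe_le_coe_iff.mpr (le_of_lt hlt)
        _ ≤ _ := by
            exact le_sSup ⟨bc.1, bc.2, x₀, y, s, by simpa using hbcU, hx₀, hx₀0, hys, hs, rfl⟩
    · apply sSup_le
      rintro e ⟨b, c, x, y, s, hbc, hx, hx0, hys, hs, rfl⟩
      have hU : (b, c) ∈ Ubar m n Ahat bhat chat U :=
        ⟨hbc, ⟨x, hx, hx0⟩, ⟨(y, s), hys, hs⟩⟩
      have h1 : (((bhat + b) ⬝ᵥ y : ℝ) : EReal) ≤ pval m n Ahat bhat b chat c := by
        apply le_sInf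
        rintro v ⟨x', hx'P, rfl⟩
        exact EReal.coe_le_coe_iff.mpr (weak_duality hx'P.1 hx'P.2 hys hs)
      exact h1.trans (le_sSup ⟨(b, c), hU, rfl⟩)
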